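/- For every odd integer n ≥ 1, real a ≥ 1, and x ∈ (−1, 1): ∑_{j=0}^n C(n + a − j, n − j) U_j(x) ≥ 2(1 + x), with equality if and only if (n = 1, a = 1) or (n = 3, a = 1, x = 0). -/

import Mathlib

open Real Finset Polynomial Polynomial.Chebyshev

/-- Generalized binomial coefficient `(a + k choose k) = ∏_{ν=1}^{k} (a+ν)/ν`. -/
noncomputable def gbinom (a : ℝ) (k : ℕ) : ℝ := ∏ ν ∈ Finset.Icc 1 k, (a + ν) / ν

noncomputable def uch (x : ℝ) (j : ℤ) : ℝ := (Polynomial.Chebyshev.U ℝ j).eval x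

lemma gbinom_zero (a : ℝ) : gbinom a 0 = 1 := by simp [gbinom]

lemma gbinom_succ (a : ℝ) (k : ℕ) :
    gbinom a (k+1) = gbinom a k * ((a + (k+1)) / (k+1)) := by
  rw [gbinom, gbinom, Finset.prod_Icc_succ_top (by omega : 1 ≤ k+1)]
  push_cast
  ring_nf

lemma gbinom_one_eq (k : ℕ) : gbinom 1 k = k + 1 := by
  induction k with
  | zero => simp [gbinom_zero]
  | succ k ih =>
    rw [gbinom_succ, ih]
    have : ((k:ℝ)+1) ≠ 0 := by positivity
    field_simp
    push_cast; ring

lemma gbinom_shift (a : ℝ) (k : ℕ) : gbinom (a-1) (k+1) = gbinom a k * a / (k+1) := by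
  induction k with
  | zero => simp [gbinom_succ, gbinom_zero]
  | succ k ih =>
    rw [gbinom_succ, ih, gbinom_succ]
    have h1 : ((k:ℝ)+1) ≠ 0 := by positivity
    have h2 : ((k:ℝ)+2) ≠ 0 := by positivity
    push_cast
    field_simp
    ring

lemma gbinom_pascal (a : ℝ) (k : ℕ) :
    gbinom a (k+1) = gbinom (a-1) (k+1) + gbinom a k := by
  rw [gbinom_shift, gbinom_succ]
  have h1 : ((k:ℝ)+1) ≠ 0 := by positivity
  field_simp

lemma gbinom_hockey (b : ℝ) (m : ℕ) :
    ∑ i ∈ range (m+1), gbinom b i = gbinom (b+1) m := by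
  induction m with
  | zero => simp [gbinom_zero]
  | succ m ih =>
    rw [Finset.sum_range_succ, ih]
    have := gbinom_pascal (b+1) m
    simp only [add_sub_cancel_right] at this
    rw [this]; ring

lemma gbinom_conv (a : ℝ) (m : ℕ) :
    gbinom a m = ∑ j ∈ range (m+1), gbinom (a-2) j * ((m - j : ℕ) + 1) := by
  induction m with
  | zero => simp [gbinom_zero]
  | succ m ih =>
    have step : ∑ j ∈ range (m+2), gbinom (a-2) j * ((m+1 - j : ℕ) + 1)
        = (∑ j ∈ range (m+1), gbinom (a-2) j * ((m - j : ℕ) + 1))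
          + ∑ j ∈ range (m+2), gbinom (a-2) j := by
      rw [Finset.sum_range_succ (f := fun j => gbinom (a-2) j * ((m+1 - j : ℕ) + 1)),
          Finset.sum_range_succ (f := fun j => gbinom (a-2) j)]
      have : ∀ j ∈ range (m+1), gbinom (a-2) j * ((m+1 - j : ℕ) + 1)
          = gbinom (a-2) j * ((m - j : ℕ) + 1) + gbinom (a-2) j := by
        intro j hj
        simp only [Finset.mem_range] at hj
        have : (m+1-j : ℕ) = (m-j : ℕ) + 1 := by omega
        rw [this]; push_cast; ring
      rw [Finset.sum_congr rfl this, Finset.sum_add_distrib]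
      simp
      ring
    rw [step, ← ih, gbinom_hockey]
    have := gbinom_pascal a m
    rw [show a - 2 + 1 = a - 1 by ring]
    rw [this]; ring

lemma gbinom_nonneg {b : ℝ} (hb : -1 ≤ b) (k : ℕ) : 0 ≤ gbinom b k := by
  apply Finset.prod_nonneg
  intro ν hν
  simp only [Finset.mem_Icc] at hν
  have h1 : (1:ℝ) ≤ ν := by exact_mod_cast hν.1
  apply div_nonneg (by linarith) (by linarith)



lemma uch_rec (x : ℝ) (j : ℤ) : uch x (j+2) = 2*x*uch x (j+1) - uch x j := by
  simp [uch, U_add_two]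

lemma uch_zero (x : ℝ) : uch x 0 = 1 := by simp [uch]
lemma uch_one (x : ℝ) : uch x 1 = 2*x := by simp [uch]
lemma uch_neg_one (x : ℝ) : uch x (-1) = 0 := by simp [uch]
lemma uch_two (x : ℝ) : uch x 2 = 4*x^2-1 := by simp [uch, U_two]

lemma uch_pair (x : ℝ) (q : ℕ) :
    uch x (2*q+1) = uch x q * (uch x (q+1) - uch x (q-1)) ∧
    uch x (2*q+2) = uch x (q+1)^2 - uch x q^2 := by
  induction q with
  | zero =>
    refine ⟨?_, ?_⟩ <;>
      · norm_num [uch_one, uch_zero, uch_neg_one, uch_two]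
        try ring_nf
  | succ q ih =>
    obtain ⟨h1, h2⟩ := ih
    have e1 : uch x ((q:ℤ)+1) = 2*x*uch x q - uch x ((q:ℤ)-1) := by
      have h := uch_rec x ((q:ℤ)-1)
      rw [show ((q:ℤ)-1+2) = (q:ℤ)+1 by ring, show ((q:ℤ)-1+1) = (q:ℤ) by ring] at h
      exact h
    have e2 : uch x ((q:ℤ)+2) = 2*x*uch x ((q:ℤ)+1) - uch x q := uch_rec x q
    have e3 : uch x (2*(q:ℤ)+3) = 2*x*uch x (2*(q:ℤ)+2) - uch x (2*(q:ℤ)+1) := by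
      have h := uch_rec x (2*(q:ℤ)+1)
      rw [show (2*(q:ℤ)+1+2) = 2*(q:ℤ)+3 by ring, show (2*(q:ℤ)+1+1) = 2*(q:ℤ)+2 by ring] at h
      exact h
    have e4 : uch x (2*(q:ℤ)+4) = 2*x*uch x (2*(q:ℤ)+3) - uch x (2*(q:ℤ)+2) := by
      have h := uch_rec x (2*(q:ℤ)+2)
      rw [show (2*(q:ℤ)+2+2) = 2*(q:ℤ)+4 by ring, show (2*(q:ℤ)+2+1) = 2*(q:ℤ)+3 by ring] at h
      exact h
    push_cast
    rw [show (2*((q:ℤ)+1)+1) = 2*(q:ℤ)+3 by ring, show (2*((q:ℤ)+1)+2) = 2*(q:ℤ)+4 by ring,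
        show ((q:ℤ)+1+1) = (q:ℤ)+2 by ring, show ((q:ℤ)+1-1) = (q:ℤ) by ring]
    constructor
    · rw [e3, e2, h2, h1, e1]; ring
    · rw [e4, e3, e2, h2, h1, e1]; ring

noncomputable def psum (x : ℝ) (m : ℕ) : ℝ := ∑ j ∈ range (m+1), uch x j

lemma psum_succ (x : ℝ) (m : ℕ) : psum x (m+1) = psum x m + uch x (m+1) := by
  rw [psum, psum, Finset.sum_range_succ]
  push_cast
  ring

lemma sumC (x : ℝ) (q : ℕ) :
    2 * psum x (2*q) + uch x (2*q+1) = 2*(1+x) * uch x q ^ 2 := by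
  induction q with
  | zero => simp [psum, uch_zero, uch_one]; ring
  | succ q ih =>
    have h2 : uch x (2*(q:ℤ)+2) = uch x ((q:ℤ)+1)^2 - uch x q^2 := (uch_pair x q).2
    have e3 : uch x (2*(q:ℤ)+3) = 2*x*uch x (2*(q:ℤ)+2) - uch x (2*(q:ℤ)+1) := by
      have h := uch_rec x (2*(q:ℤ)+1)
      rw [show (2*(q:ℤ)+1+2) = 2*(q:ℤ)+3 by ring, show (2*(q:ℤ)+1+1) = 2*(q:ℤ)+2 by ring] at h
      exact h
    have hps : psum x (2*(q+1)) = psum x (2*q) + uch x (2*(q:ℤ)+1) + uch x (2*(q:ℤ)+2) := by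
      rw [show 2*(q+1) = (2*q+1)+1 by ring, psum_succ, psum_succ]
      push_cast
      rw [show (2*(q:ℤ)+1+1) = 2*(q:ℤ)+2 by ring]
    rw [hps]
    push_cast
    rw [show (2*((q:ℤ)+1)+1) = 2*(q:ℤ)+3 by ring]
    rw [e3, h2]
    linear_combination ih

lemma sumD (x : ℝ) (q : ℕ) :
    2 * psum x (2*q+1) + uch x (2*q+2) = (uch x q + uch x (q+1)) ^ 2 := by
  induction q with
  | zero => simp [psum, uch_zero, uch_one, uch_two, Finset.sum_range_succ]; ring
  | succ q ih =>
    obtain ⟨h1, h2⟩ := uch_pair x q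
    have e1 : uch x ((q:ℤ)+2) = 2*x*uch x ((q:ℤ)+1) - uch x q := uch_rec x q
    have e3 : uch x (2*(q:ℤ)+3) = 2*x*uch x (2*(q:ℤ)+2) - uch x (2*(q:ℤ)+1) := by
      have h := uch_rec x (2*(q:ℤ)+1)
      rw [show (2*(q:ℤ)+1+2) = 2*(q:ℤ)+3 by ring, show (2*(q:ℤ)+1+1) = 2*(q:ℤ)+2 by ring] at h
      exact h
    have e4 : uch x (2*(q:ℤ)+4) = 2*x*uch x (2*(q:ℤ)+3) - uch x (2*(q:ℤ)+2) := by
      have h := uch_rec x (2*(q:ℤ)+2)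
      rw [show (2*(q:ℤ)+2+2) = 2*(q:ℤ)+4 by ring, show (2*(q:ℤ)+2+1) = 2*(q:ℤ)+3 by ring] at h
      exact h
    have hq1 : uch x ((q:ℤ)+1) = 2*x*uch x q - uch x ((q:ℤ)-1) := by
      have h := uch_rec x ((q:ℤ)-1)
      rw [show ((q:ℤ)-1+2) = (q:ℤ)+1 by ring, show ((q:ℤ)-1+1) = (q:ℤ) by ring] at h
      exact h
    have hps : psum x (2*(q+1)+1) = psum x (2*q+1) + uch x (2*(q:ℤ)+2) + uch x (2*(q:ℤ)+3) := by
      rw [show 2*(q+1)+1 = ((2*q+1)+1)+1 by ring, psum_succ, psum_succ]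
      push_cast
      rw [show (2*(q:ℤ)+1+1) = 2*(q:ℤ)+2 by ring, show (2*(q:ℤ)+2+1) = 2*(q:ℤ)+3 by ring]
    rw [hps]
    push_cast
    rw [show (2*((q:ℤ)+1)+2) = 2*(q:ℤ)+4 by ring, show ((q:ℤ)+1+1) = (q:ℤ)+2 by ring]
    rw [e4, e3, h2, h1, e1, hq1]
    rw [h2, hq1] at ih
    linear_combination ih

/-- `Lam n a x = ∑_{j=0}^n C(n+a−j, n−j) U_j(x)`, with `U_j` the Chebyshev
polynomial of the second kind. -/
noncomputable def Lam (n : ℕ) (a : ℝ) (x : ℝ) : ℝ :=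
  ∑ j ∈ Finset.range (n + 1), gbinom a (n - j) * (Polynomial.Chebyshev.U ℝ j).eval x

lemma Lam_eq (n : ℕ) (a x : ℝ) :
    Lam n a x = ∑ j ∈ range (n+1), gbinom a (n-j) * uch x j := rfl

lemma Lam_one_step (x : ℝ) (m : ℕ) :
    Lam (m+2) 1 x = Lam m 1 x + (2 * psum x (m+1) + uch x ((m:ℤ)+2)) := by
  rw [Lam_eq, Lam_eq, psum]
  rw [Finset.sum_range_succ (f := fun j => gbinom 1 (m+2-j) * uch x (j:ℤ)) (n := m+2),
      Finset.sum_range_succ (f := fun j => gbinom 1 (m+2-j) * uch x (j:ℤ)) (n := m+1),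
      Finset.sum_range_succ (f := fun j => uch x (j:ℤ)) (n := m+1)]
  have h1 : ∀ j ∈ range (m+1), gbinom 1 (m+2-j) * uch x j
      = gbinom 1 (m-j) * uch x j + 2 * uch x j := by
    intro j hj
    simp only [Finset.mem_range] at hj
    rw [gbinom_one_eq, gbinom_one_eq]
    have : (m+2-j : ℕ) = (m-j : ℕ) + 2 := by omega
    rw [this]; push_cast; ring
  rw [Finset.sum_congr rfl h1, Finset.sum_add_distrib]
  simp only [Nat.add_sub_cancel, Nat.sub_self]
  rw [show m+2-(m+1) = 1 by omega, gbinom_one_eq, gbinom_one_eq]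
  push_cast
  rw [← Finset.mul_sum]
  ring

lemma LamE1 (x : ℝ) (q : ℕ) :
    Lam (2*q+1) 1 x = 2*(1+x) * ∑ i ∈ range (q+1), uch x i ^ 2 := by
  induction q with
  | zero =>
    rw [Lam_eq]
    simp [Finset.sum_range_succ, gbinom_one_eq, uch_zero, uch_one]
    ring
  | succ q ih =>
    have hC := sumC x (q+1)
    rw [show 2*(q+1)+1 = (2*q+1)+2 by ring, Lam_one_step, ih, Finset.sum_range_succ (n := q+1)]
    rw [show ((2*q+1:ℕ):ℤ)+2 = 2*((q:ℤ)+1)+1 by push_cast; ring]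
    rw [show (2*q+1)+1 = 2*(q+1) by ring]
    rw [show ((2*(q+1):ℕ)) = 2*(q+1) from rfl] at hC
    push_cast at hC ⊢
    linarith [hC]

lemma LamE2 (x : ℝ) (q : ℕ) :
    Lam (2*q) 1 x = 1 + ∑ i ∈ range q, (uch x i + uch x (i+1)) ^ 2 := by
  induction q with
  | zero => rw [Lam_eq]; simp [gbinom_zero, uch_zero]
  | succ q ih =>
    have hD := sumD x q
    rw [show 2*(q+1) = (2*q)+2 by ring, Lam_one_step, ih, Finset.sum_range_succ (n := q)]
    rw [show ((2*q:ℕ):ℤ)+2 = 2*(q:ℤ)+2 by push_cast; ring]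
    push_cast at hD ⊢
    linarith [hD]

lemma tri_key (n : ℕ) (g : ℕ → ℕ → ℝ) :
    ∑ j ∈ range (n+1), ∑ i ∈ range (n+1-j), g j i
    = ∑ j ∈ range (n+1), ∑ i ∈ range (n+1), if j + i ≤ n then g j i else 0 := by
  apply Finset.sum_congr rfl
  intro j hj
  simp only [Finset.mem_range] at hj
  rw [← Finset.sum_filter]
  congr 1
  ext i
  simp only [Finset.mem_filter, Finset.mem_range]
  omega

lemma tri_swap (n : ℕ) (f : ℕ → ℕ → ℝ) :
    ∑ j ∈ range (n+1), ∑ i ∈ range (n+1-j), f j i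
    = ∑ i ∈ range (n+1), ∑ j ∈ range (n+1-i), f j i := by
  rw [tri_key n f, tri_key n (fun i j => f j i), Finset.sum_comm]
  apply Finset.sum_congr rfl; intro j _
  apply Finset.sum_congr rfl; intro i _
  simp only [add_comm]

lemma Lam_master (n : ℕ) (a x : ℝ) :
    Lam n a x = ∑ i ∈ range (n+1), gbinom (a-2) i * Lam (n-i) 1 x := by
  rw [Lam_eq]
  have h1 : ∀ j ∈ range (n+1), gbinom a (n-j) * uch x j
      = ∑ i ∈ range (n+1-j), gbinom (a-2) i * ((n-j-i : ℕ) + 1) * uch x j := by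
    intro j hj
    simp only [Finset.mem_range] at hj
    rw [gbinom_conv a (n-j), Finset.sum_mul]
    rw [show n+1-j = (n-j)+1 by omega]
  rw [Finset.sum_congr rfl h1, tri_swap n (fun j i => gbinom (a-2) i * ((n-j-i : ℕ) + 1) * uch x j)]
  apply Finset.sum_congr rfl
  intro i hi
  simp only [Finset.mem_range] at hi
  rw [Lam_eq, Finset.mul_sum, show n+1-i = (n-i)+1 by omega]
  apply Finset.sum_congr rfl
  intro j hj
  simp only [Finset.mem_range] at hj
  rw [gbinom_one_eq, show n-j-i = n-i-j by omega]
  ring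

lemma Lam_even_ge_one (x : ℝ) (q : ℕ) : 1 ≤ Lam (2*q) 1 x := by
  rw [LamE2]
  have : 0 ≤ ∑ i ∈ range q, (uch x i + uch x (i+1)) ^ 2 :=
    Finset.sum_nonneg (fun i _ => sq_nonneg _)
  linarith

lemma Lam_odd_sq (x : ℝ) (q : ℕ) :
    Lam (2*q+1) 1 x = 2*(1+x) * ∑ i ∈ range (q+1), uch x i ^ 2 := LamE1 x q

lemma sq_sum_ge_one (x : ℝ) (q : ℕ) : 1 ≤ ∑ i ∈ range (q+1), uch x i ^ 2 := by
  have h0 : uch x ((0:ℕ):ℤ) ^ 2 = 1 := by norm_num [uch_zero]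
  calc (1:ℝ) = uch x ((0:ℕ):ℤ) ^ 2 := h0.symm
    _ ≤ ∑ i ∈ range (q+1), uch x i ^ 2 :=
        Finset.single_le_sum (f := fun i : ℕ => uch x i ^ 2)
          (fun i _ => sq_nonneg _) (by simp)

lemma Lam_one_nonneg {x : ℝ} (hx : -1 < x) (m : ℕ) : 0 ≤ Lam m 1 x := by
  rcases Nat.even_or_odd m with ⟨q, hq⟩ | ⟨q, hq⟩
  · have := Lam_even_ge_one x q
    rw [show 2*q = m by omega] at this
    linarith
  · rw [hq, Lam_odd_sq]
    have h1 := sq_sum_ge_one x q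
    nlinarith

lemma gbinom_one' (a : ℝ) : gbinom (a-2) 1 = a - 1 := by
  rw [show gbinom (a-2) 1 = gbinom (a-2) (0+1) from rfl, gbinom_succ, gbinom_zero]
  push_cast
  ring

theorem stmt_16 (n : ℕ) (hn : 1 ≤ n) (hodd : Odd n) (a : ℝ) (ha : 1 ≤ a)
    (x : ℝ) (hx : x ∈ Set.Ioo (-1 : ℝ) 1) :
    2 * (1 + x) ≤ Lam n a x ∧
    (Lam n a x = 2 * (1 + x) ↔ (n = 1 ∧ a = 1) ∨ (n = 3 ∧ a = 1 ∧ x = 0)) := by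
  obtain ⟨hx1, hx2⟩ := hx
  obtain ⟨q, hq⟩ := hodd
  have hxpos : (0:ℝ) < 1 + x := by linarith
  have hb : (-1:ℝ) ≤ a - 2 := by linarith
  -- decomposition
  have hdecomp : Lam n a x
      = (∑ i ∈ range n, gbinom (a-2) (i+1) * Lam (n-(i+1)) 1 x) + Lam n 1 x := by
    have := Lam_master n a x
    rw [Finset.sum_range_succ' (f := fun i => gbinom (a-2) i * Lam (n-i) 1 x) n] at this
    simpa [gbinom_zero] using this
  have hterm : ∀ i ∈ range n, 0 ≤ gbinom (a-2) (i+1) * Lam (n-(i+1)) 1 x := by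
    intro i _
    exact mul_nonneg (gbinom_nonneg hb _) (Lam_one_nonneg hx1 _)
  have hR : 0 ≤ ∑ i ∈ range n, gbinom (a-2) (i+1) * Lam (n-(i+1)) 1 x :=
    Finset.sum_nonneg hterm
  -- Lam n 1 x ≥ 2(1+x)
  have hn1 : Lam n 1 x = 2*(1+x) * ∑ i ∈ range (q+1), uch x i ^ 2 := by
    rw [show n = 2*q+1 by omega]; exact Lam_odd_sq x q
  have hS := sq_sum_ge_one x q
  have hlow : 2 * (1 + x) ≤ Lam n 1 x := by
    rw [hn1]; nlinarith
  constructor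
  · rw [hdecomp]
    linarith
  constructor
  · -- forward
    intro heq
    have hR0 : ∑ i ∈ range n, gbinom (a-2) (i+1) * Lam (n-(i+1)) 1 x = 0 := by
      rw [hdecomp] at heq
      linarith
    have heach := (Finset.sum_eq_zero_iff_of_nonneg hterm).mp hR0
    have h0 : gbinom (a-2) 1 * Lam (n-1) 1 x = 0 := by
      have := heach 0 (by simp [Finset.mem_range]; omega)
      simpa using this
    have hLn1 : 1 ≤ Lam (n-1) 1 x := by
      have := Lam_even_ge_one x q
      rw [show 2*q = n-1 by omega] at this
      exact this
    have ha1 : a = 1 := by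
      rw [gbinom_one'] at h0
      rcases mul_eq_zero.mp h0 with h | h
      · linarith
      · linarith
    have hLam1' : Lam n 1 x = 2*(1+x) := by
      rw [hdecomp, hR0] at heq
      linarith
    have hSeq : ∑ i ∈ range (q+1), uch x i ^ 2 = 1 := by
      have h2 : 2*(1+x) ≠ 0 := by positivity
      apply mul_left_cancel₀ h2
      rw [mul_one, ← hn1, hLam1']
    have hrest : ∑ i ∈ range q, uch x ((i+1:ℕ)) ^ 2 = 0 := by
      rw [Finset.sum_range_succ' (f := fun i : ℕ => uch x i ^ 2) q] at hSeq
      have : uch x ((0:ℕ):ℤ) ^ 2 = 1 := by norm_num [uch_zero]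
      rw [this] at hSeq
      linarith
    have hzero : ∀ i ∈ range q, uch x ((i+1:ℕ)) = 0 := by
      intro i hi
      have := (Finset.sum_eq_zero_iff_of_nonneg (fun i _ => sq_nonneg _)).mp hrest i hi
      exact pow_eq_zero_iff (by norm_num) |>.mp this
    -- case on q
    match q, hq, hzero with
    | 0, hq, hzero => exact Or.inl ⟨by omega, ha1⟩
    | 1, hq, hzero =>
      have h1 := hzero 0 (by simp)
      norm_num [uch_one] at h1
      exact Or.inr ⟨by omega, ha1, h1⟩
    | (q+2), hq, hzero =>
      have h1 := hzero 0 (by simp)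
      have h2 := hzero 1 (by simp [Finset.mem_range])
      norm_num [uch_one] at h1
      norm_num [uch_two, h1] at h2
  · -- backward
    rintro (⟨hn1', ha1⟩ | ⟨hn3, ha1, hx0⟩)
    · subst hn1' ha1
      have := Lam_odd_sq x 0
      simp only [show 2*0+1 = 1 from rfl] at this
      rw [this]
      simp [uch_zero]
    · subst hn3 ha1 hx0
      have := Lam_odd_sq 0 1
      simp only [show 2*1+1 = 3 from rfl] at this
      rw [this, Finset.sum_range_succ, Finset.sum_range_succ]
      simp [uch_zero, uch_one]
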